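/- Let X and Y be Hilbert spaces, T : X → Y a bounded linear operator with a least-squares projection approximation {(X_n, T_n)}. Then for every n and every y ∈ D(T†) the error identity T_n† y − T† y = T_n† T (I − P_{X_n}) T† y − (I − P_{X_n}) T† y holds (i.e., T_n† y − T† y = (T_n† T − I)(I − P_{X_n}) T† y). -/

import Mathlib

open Filter Topology Metric Submodule ContinuousLinearMap

/-- Orthogonal projection onto a subspace `K` (as an operator `H →L[ℝ] H`),
defined whenever `K` admits orthogonal projections (e.g. `K` closed). -/
noncomputable def orthProj {H : Type*} [NormedAddCommGroup H] [InnerProductSpace ℝ H]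
    (K : Submodule ℝ H) : H →L[ℝ] H :=
  open scoped Classical in
  if h : HasOrthogonalProjection K then
    haveI := h
    K.subtypeL.comp (orthogonalProjection K)
  else 0

section helpers

variable {H : Type*} [NormedAddCommGroup H] [InnerProductSpace ℝ H]

lemma orthProj_apply (K : Submodule ℝ H) [HasOrthogonalProjection K] (v : H) :
    orthProj K v = (orthogonalProjection K v : H) := by
  simp [orthProj, dif_pos ‹HasOrthogonalProjection K›]

lemma orthProj_mem (K : Submodule ℝ H) [HasOrthogonalProjection K] (v : H) :
    orthProj K v ∈ K := by
  rw [orthProj_apply]; exact (orthogonalProjection K v).2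

lemma orthProj_eq_self (K : Submodule ℝ H) [HasOrthogonalProjection K] {v : H}
    (hv : v ∈ K) : orthProj K v = v := by
  rw [orthProj_apply]; exact (Submodule.starProjection_eq_self_iff (K := K)).2 hv

lemma orthProj_eq_zero (K : Submodule ℝ H) [HasOrthogonalProjection K] {v : H}
    (hv : v ∈ Kᗮ) : orthProj K v = 0 := by
  rw [orthProj_apply, Submodule.orthogonalProjectionOnto_apply_of_mem_orthogonal hv,
    ZeroMemClass.coe_zero]

lemma orthProj_inner (K : Submodule ℝ H) [HasOrthogonalProjection K] (u v : H) :
    (inner ℝ (orthProj K u) v : ℝ) = inner ℝ u (orthProj K v) := by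
  rw [orthProj_apply, orthProj_apply]
  exact Submodule.inner_starProjection_left_eq_right (K := K) u v

end helpers

variable {X Y : Type*} [NormedAddCommGroup X] [InnerProductSpace ℝ X] [CompleteSpace X]
  [NormedAddCommGroup Y] [InnerProductSpace ℝ Y] [CompleteSpace Y]

/-- Error identity: `Tₙ†y − T†y = (Tₙ†T − I)(I − P_{Xₙ})T†y` on `D(T†)`. -/
theorem stmt7
    (T : X →L[ℝ] Y) (Xn : ℕ → Submodule ℝ X)
    (hfin : ∀ n, FiniteDimensional ℝ (Xn n))
    (hinf : ¬ FiniteDimensional ℝ X)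
    (hproj : ∀ x : X, Tendsto (fun n => orthProj (Xn n) x) atTop (𝓝 x))
    (Tn : ℕ → X →L[ℝ] Y) (hTn : ∀ n, Tn n = T.comp (orthProj (Xn n)))
    (Tdag : Y → X)
    (hTdag : ∀ y ∈ (LinearMap.range (T : X →ₗ[ℝ] Y) ⊔ (LinearMap.range (T : X →ₗ[ℝ] Y))ᗮ : Submodule ℝ Y),
      Tdag y ∈ (LinearMap.ker (T : X →ₗ[ℝ] Y))ᗮ ∧
        T (Tdag y) = orthProj (LinearMap.range (T : X →ₗ[ℝ] Y)).topologicalClosure y)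
    (Tdagn : ℕ → Y → X)
    (hTdagn : ∀ n (y : Y), Tdagn n y ∈ (LinearMap.ker (Tn n : X →ₗ[ℝ] Y))ᗮ ∧
      (Tn n) (Tdagn n y) = orthProj ((Xn n).map (T : X →ₗ[ℝ] Y)) y) :
    ∀ n, ∀ y ∈ (LinearMap.range (T : X →ₗ[ℝ] Y) ⊔ (LinearMap.range (T : X →ₗ[ℝ] Y))ᗮ : Submodule ℝ Y),
      Tdagn n y - Tdag y =
        Tdagn n (T (Tdag y - orthProj (Xn n) (Tdag y))) -
          (Tdag y - orthProj (Xn n) (Tdag y)) := by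
  intro n y hy
  haveI := hfin n
  haveI : FiniteDimensional ℝ (Submodule.map (T : X →ₗ[ℝ] Y) (Xn n)) :=
    Module.Finite.map (Xn n) (T : X →ₗ[ℝ] Y)
  haveI : HasOrthogonalProjection (Submodule.map (T : X →ₗ[ℝ] Y) (Xn n)) :=
    HasOrthogonalProjection.ofCompleteSpace _
  set P : X →L[ℝ] X := orthProj (Xn n) with hP
  set x : X := Tdag y with hx
  obtain ⟨hx1, hx2⟩ := hTdag y hy
  obtain ⟨hu1, hu2⟩ := hTdagn n y
  obtain ⟨hv1, hv2⟩ := hTdagn n (T (x - P x))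
  -- P x ∈ (ker Tn)ᗮ
  have hPx_mem : P x ∈ (LinearMap.ker (Tn n : X →ₗ[ℝ] Y))ᗮ := by
    rw [Submodule.mem_orthogonal]
    intro v hv
    have hPv : P v ∈ LinearMap.ker (T : X →ₗ[ℝ] Y) := by
      have : Tn n v = 0 := hv
      rw [hTn n] at this
      exact this
    have := orthProj_inner (Xn n) v x
    rw [real_inner_comm] at this
    rw [← hP] at this
    rw [← this, real_inner_comm]
    exact hx1 (P v) hPv
  -- key: Tdagn n y - P x = Tdagn n (T (x - P x))
  have hPP : P (P x) = P x := orthProj_eq_self (Xn n) (orthProj_mem (Xn n) x)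
  have hTnPx : Tn n (P x) = T (P x) := by
    rw [hTn n]; simp [hPP]; exact congrArg T hPP
  have hTPx_mem : T (P x) ∈ (Xn n).map (T : X →ₗ[ℝ] Y) := Submodule.mem_map_of_mem (orthProj_mem (Xn n) x)
  have hle : (Xn n).map (T : X →ₗ[ℝ] Y) ≤ (LinearMap.range (T : X →ₗ[ℝ] Y)).topologicalClosure := by
    refine le_trans ?_ (LinearMap.range (T : X →ₗ[ℝ] Y)).le_topologicalClosure
    rintro _ ⟨w, -, rfl⟩
    exact ⟨w, rfl⟩
  have hproj_y : orthProj ((Xn n).map (T : X →ₗ[ℝ] Y)) (orthProj (LinearMap.range (T : X →ₗ[ℝ] Y)).topologicalClosure y)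
      = orthProj ((Xn n).map (T : X →ₗ[ℝ] Y)) y := by
    have hyo : y - orthProj (LinearMap.range (T : X →ₗ[ℝ] Y)).topologicalClosure y
        ∈ ((Xn n).map (T : X →ₗ[ℝ] Y))ᗮ := by
      apply Submodule.orthogonal_le hle
      rw [orthProj_apply]
      exact Submodule.sub_starProjection_mem_orthogonal y
    have := orthProj_eq_zero ((Xn n).map (T : X →ₗ[ℝ] Y)) hyo
    rw [map_sub, sub_eq_zero] at this
    exact this.symm
  -- both candidates have the same Tn-image
  have himg : Tn n (Tdagn n y - P x) = Tn n (Tdagn n (T (x - P x))) := by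
    rw [map_sub, hu2, hTnPx, hv2, map_sub, map_sub]
    rw [hx2, hproj_y, orthProj_eq_self ((Xn n).map (T : X →ₗ[ℝ] Y)) hTPx_mem]
  -- both candidates lie in (ker Tn)ᗮ, hence are equal
  have hmem : Tdagn n y - P x ∈ (LinearMap.ker (Tn n : X →ₗ[ℝ] Y))ᗮ :=
    Submodule.sub_mem _ hu1 hPx_mem
  have hdmem : (Tdagn n y - P x) - Tdagn n (T (x - P x))
      ∈ (LinearMap.ker (Tn n : X →ₗ[ℝ] Y))ᗮ := Submodule.sub_mem _ hmem hv1
  have hdker : (Tdagn n y - P x) - Tdagn n (T (x - P x)) ∈ LinearMap.ker (Tn n : X →ₗ[ℝ] Y) := by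
    rw [LinearMap.mem_ker, map_sub, ContinuousLinearMap.coe_coe, himg, sub_self]
  have hzero : (Tdagn n y - P x) - Tdagn n (T (x - P x)) = 0 := by
    have := (Submodule.mem_orthogonal _ _).1 hdmem _ hdker
    exact inner_self_eq_zero.mp this
  have heq : Tdagn n (T (x - P x)) = Tdagn n y - P x := by
    rw [sub_eq_zero] at hzero
    exact hzero.symm
  rw [heq]
  abel
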